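/- Let G be a finite out-tree and let G_red be its reduction: contract every maximal directed path through vertices emitting exactly one edge into a single weighted edge, recording the path length as a weight. Then two out-trees G and H are isomorphic as directed graphs if and only if G_red and H_red are isomorphic as weighted graphs (a graph isomorphism preserving the weights of vertices/edges). -/

import Mathlib

/-- Finite rooted (out-)trees. -/
inductive RTree : Type
  | node : List RTree → RTree

/-- Isomorphism of rooted trees. -/
inductive RTree.Iso : RTree → RTree → Prop
  | node (cs cs' l : List RTree) (hp : l.Perm cs') (h : List.Forall₂ RTree.Iso cs l) :
      RTree.Iso (.node cs) (.node cs')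

/-- Weighted rooted trees: each vertex carries a weight recording the length of the
contracted path above it. -/
inductive WTree : Type
  | node : ℕ → List WTree → WTree

/-- Isomorphism of weighted rooted trees: a rooted tree isomorphism preserving weights. -/
inductive WTree.Iso : WTree → WTree → Prop
  | node (w : ℕ) (cs cs' l : List WTree) (hp : l.Perm cs') (h : List.Forall₂ WTree.Iso cs l) :
      WTree.Iso (.node w cs) (.node w cs')

/-- Increase the weight at the root by one (one more contracted edge). -/
def WTree.bump : WTree → WTree
  | .node w l => .node (w + 1) l

/-- The reduction of an out-tree: maximal directed paths through vertices emitting exactly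
one edge are contracted to a single vertex, whose weight records the path length. -/
def RTree.red : RTree → WTree
  | .node [c] => WTree.bump c.red
  | .node cs => .node 0 (cs.attach.map fun x => x.1.red)
decreasing_by
  · simp; omega
  · have := List.sizeOf_lt_of_mem x.2
    simp only [RTree.node.sizeOf_spec] at *
    omega


private lemma red_one (c : RTree) : (RTree.node [c]).red = c.red.bump := by rw [RTree.red]

private lemma red_not_single (cs : List RTree) (h : cs.length ≠ 1) :
    (RTree.node cs).red = .node 0 (cs.map RTree.red) := by
  match cs with
  | [] =>
    rw [RTree.red]
    · simp [List.attach_map_val]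
    · simp
  | [c] => simp at h
  | a :: b :: r =>
    rw [RTree.red]
    · simp [List.attach_map_val]
    · simp

private lemma perm_map_exists {α β : Type*} (f : α → β) :
    ∀ {l : List β} {s : List α}, l.Perm (s.map f) → ∃ t : List α, t.Perm s ∧ l = t.map f := by
  intro l
  induction l with
  | nil =>
    intro s h
    have : s.map f = [] := h.nil_eq.symm
    rw [List.map_eq_nil_iff] at this
    exact ⟨[], by simp [this]⟩
  | cons b l ih =>
    intro s h
    have hb : b ∈ s.map f := h.subset (List.mem_cons_self)
    obtain ⟨a, ha, rfl⟩ := List.mem_map.mp hb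
    obtain ⟨s₁, s₂, rfl⟩ := List.append_of_mem ha
    have hmid : (f a :: (s₁ ++ s₂).map f).Perm ((s₁ ++ a :: s₂).map f) := by
      simp only [List.map_append, List.map_cons]
      exact List.perm_middle.symm
    have h2 : l.Perm ((s₁ ++ s₂).map f) := (h.trans hmid.symm).cons_inv
    obtain ⟨t, ht, rfl⟩ := ih h2
    exact ⟨a :: t, (ht.cons a).trans List.perm_middle.symm, by simp⟩

private lemma bump_iso {t t' : WTree} (h : WTree.Iso t t') : WTree.Iso t.bump t'.bump := by
  cases h with
  | node w cs cs' l hp hf => exact WTree.Iso.node (w + 1) cs cs' l hp hf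

private lemma unbump_iso {t t' : WTree} (h : WTree.Iso t.bump t'.bump) : WTree.Iso t t' := by
  cases t with
  | node w L =>
  cases t' with
  | node w' L' =>
  simp only [WTree.bump] at h
  cases h with
  | node _ _ _ l hp hf => exact WTree.Iso.node w L L' l hp hf

private lemma not_bump_iso_zero (t : WTree) (l' : List WTree) :
    ¬ WTree.Iso t.bump (WTree.node 0 l') := by
  cases t with
  | node w L =>
    simp only [WTree.bump]
    intro h
    cases h

private lemma not_zero_iso_bump (t : WTree) (l' : List WTree) :
    ¬ WTree.Iso (WTree.node 0 l') t.bump := by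
  cases t with
  | node w L =>
    simp only [WTree.bump]
    intro h
    cases h

private lemma forall2_red_iff {n : ℕ}
    (IH : ∀ G H : RTree, sizeOf G ≤ n → (RTree.Iso G H ↔ WTree.Iso G.red H.red)) :
    ∀ {cs l : List RTree}, (∀ c ∈ cs, sizeOf c ≤ n) →
      (List.Forall₂ RTree.Iso cs l ↔
        List.Forall₂ (fun a b => WTree.Iso a.red b.red) cs l) := by
  intro cs
  induction cs with
  | nil =>
    intro l _
    constructor <;> (intro h; cases h; exact List.Forall₂.nil)
  | cons c cs ih =>
    intro l hsz
    constructor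
    · intro h
      cases h with
      | cons hcd h' =>
        exact List.Forall₂.cons
          ((IH _ _ (hsz c (List.mem_cons_self))).mp hcd)
          ((ih (fun x hx => hsz x (List.mem_cons_of_mem _ hx))).mp h')
    · intro h
      cases h with
      | cons hcd h' =>
        exact List.Forall₂.cons
          ((IH _ _ (hsz c (List.mem_cons_self))).mpr hcd)
          ((ih (fun x hx => hsz x (List.mem_cons_of_mem _ hx))).mpr h')

private lemma key : ∀ n : ℕ, ∀ G H : RTree, sizeOf G ≤ n →
    (RTree.Iso G H ↔ WTree.Iso G.red H.red) := by
  intro n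
  induction n with
  | zero =>
    intro G H hG
    cases G with
    | node cs =>
      exfalso
      simp only [RTree.node.sizeOf_spec] at hG
      omega
  | succ n IH =>
    intro G H hG
    cases G with
    | node cs =>
    cases H with
    | node ds =>
    have hsz : ∀ c ∈ cs, sizeOf c ≤ n := by
      intro c hc
      have := List.sizeOf_lt_of_mem hc
      simp only [RTree.node.sizeOf_spec] at hG
      omega
    constructor
    · intro h
      cases h with
      | node _ _ l hp hf =>
        by_cases h1 : cs.length = 1
        · obtain ⟨c, rfl⟩ : ∃ c, cs = [c] := by
            match cs, h1 with | [c], _ => exact ⟨c, rfl⟩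
          have hl : l.length = 1 := by
            simpa using hf.length_eq.symm
          obtain ⟨x, rfl⟩ : ∃ x, l = [x] := by
            match l, hl with | [x], _ => exact ⟨x, rfl⟩
          obtain rfl : ds = [x] := hp.symm.eq_singleton
          have hcx : RTree.Iso c x := by cases hf with | cons h _ => exact h
          have hred : WTree.Iso c.red x.red :=
            (IH c x (hsz c (List.mem_cons_self))).mp hcx
          rw [red_one, red_one]
          exact bump_iso hred
        · have hd1 : ds.length ≠ 1 := by
            rw [← hp.length_eq, ← hf.length_eq]; exact h1
          rw [red_not_single cs h1, red_not_single ds hd1]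
          refine WTree.Iso.node 0 _ _ (l.map RTree.red) (hp.map _) ?_
          rw [List.forall₂_map_left_iff, List.forall₂_map_right_iff]
          exact (forall2_red_iff IH hsz).mp hf
    · intro h
      by_cases h1 : cs.length = 1 <;> by_cases h2 : ds.length = 1
      · obtain ⟨c, rfl⟩ : ∃ c, cs = [c] := by
          match cs, h1 with | [c], _ => exact ⟨c, rfl⟩
        obtain ⟨d, rfl⟩ : ∃ d, ds = [d] := by
          match ds, h2 with | [d], _ => exact ⟨d, rfl⟩
        rw [red_one, red_one] at h
        have hred : WTree.Iso c.red d.red := unbump_iso h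
        have := (IH c d (hsz c (List.mem_cons_self))).mpr hred
        exact RTree.Iso.node [c] [d] [d] (List.Perm.refl _)
          (List.Forall₂.cons this List.Forall₂.nil)
      · exfalso
        obtain ⟨c, rfl⟩ : ∃ c, cs = [c] := by
          match cs, h1 with | [c], _ => exact ⟨c, rfl⟩
        rw [red_one, red_not_single ds h2] at h
        exact not_bump_iso_zero _ _ h
      · exfalso
        obtain ⟨d, rfl⟩ : ∃ d, ds = [d] := by
          match ds, h2 with | [d], _ => exact ⟨d, rfl⟩
        rw [red_one, red_not_single cs h1] at h
        exact not_zero_iso_bump _ _ h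
      · rw [red_not_single cs h1, red_not_single ds h2] at h
        cases h with
        | node _ _ _ l hp hf =>
          obtain ⟨t, ht, rfl⟩ := perm_map_exists RTree.red hp
          rw [List.forall₂_map_left_iff, List.forall₂_map_right_iff] at hf
          exact RTree.Iso.node cs ds t ht ((forall2_red_iff IH hsz).mpr hf)

/-- Two out-trees are isomorphic iff their reductions are isomorphic as weighted trees. -/
theorem iso_iff_red_iso (G H : RTree) :
    RTree.Iso G H ↔ WTree.Iso G.red H.red :=
  key (sizeOf G) G H le_rfl
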